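/- Let U = {u ∈ ℝ³ : u₀ + u₁ + u₂ = 1, u_i ≥ 0} and let Z₀(u) = [[(u₁-u₂)/√3, u₀/3 - 2u₁/3 - 2u₂/3],[u₀, (u₂-u₁)/√3]]. If X ∈ sl₂(ℝ) satisfies the star inequalities √3·|c₁₁(X)| < c₂₁(X) and 3c₁₂(X) + c₂₁(X) < 0, then trace(Z₀(u)·X) < 0 for all u ∈ U. -/
import Mathlib


theorem stmt_10 (X : Matrix (Fin 2) (Fin 2) ℝ) (htr : X.trace = 0)
    (hstar1 : Real.sqrt 3 * |X 0 0| < X 1 0)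
    (hstar2 : 3 * X 0 1 + X 1 0 < 0) :
    ∀ u : Fin 3 → ℝ, u 0 + u 1 + u 2 = 1 → (∀ i, 0 ≤ u i) →
      ((!![(u 1 - u 2) / Real.sqrt 3, u 0 / 3 - 2 * u 1 / 3 - 2 * u 2 / 3;
           u 0, (u 2 - u 1) / Real.sqrt 3] : Matrix (Fin 2) (Fin 2) ℝ) * X).trace < 0 := by
  intro u hsum hpos
  have hs : Real.sqrt 3 > 0 := Real.sqrt_pos.mpr (by norm_num)
  have hs2 : Real.sqrt 3 * Real.sqrt 3 = 3 := Real.mul_self_sqrt (by norm_num)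
  have h1 : Real.sqrt 3 * X 0 0 < X 1 0 :=
    lt_of_le_of_lt (by nlinarith [le_abs_self (X 0 0)]) hstar1
  have h2 : Real.sqrt 3 * (-X 0 0) < X 1 0 :=
    lt_of_le_of_lt (by nlinarith [neg_abs_le (X 0 0)]) hstar1
  have htr' : X 1 1 = -X 0 0 := by
    have := htr
    simp [Matrix.trace, Fin.sum_univ_succ, Matrix.diag] at this
    linarith
  have h0 := hpos 0
  have hb := hpos 1
  have hc := hpos 2
  simp [Matrix.trace, Matrix.mul_apply, Fin.sum_univ_succ, Matrix.diag, htr']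
  have key : (u 1 - u 2) / Real.sqrt 3 * X 0 0 +
      (u 0 / 3 - 2 * u 1 / 3 - 2 * u 2 / 3) * X 1 0 +
      (u 0 * X 0 1 + (u 2 - u 1) / Real.sqrt 3 * -X 0 0) < 0 := by
    have e : (u 1 - u 2) / Real.sqrt 3 * X 0 0 + (u 2 - u 1) / Real.sqrt 3 * -X 0 0
        = (2 * u 1 - 2 * u 2) / Real.sqrt 3 * X 0 0 := by ring
    have hA : 3 * X 0 1 + X 1 0 < 0 := hstar2
    -- vertex values
    have vB : 2 / Real.sqrt 3 * X 0 0 - 2 / 3 * X 1 0 < 0 := by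
      have : 2 / Real.sqrt 3 * X 0 0 = 2 / 3 * (Real.sqrt 3 * X 0 0) := by
        field_simp
        nlinarith
      rw [this]; nlinarith
    have vC : -(2 / Real.sqrt 3) * X 0 0 - 2 / 3 * X 1 0 < 0 := by
      have : -(2 / Real.sqrt 3) * X 0 0 = 2 / 3 * (Real.sqrt 3 * (-X 0 0)) := by
        field_simp
        nlinarith
      rw [this]; nlinarith
    have expand : (u 1 - u 2) / Real.sqrt 3 * X 0 0 +
        (u 0 / 3 - 2 * u 1 / 3 - 2 * u 2 / 3) * X 1 0 +
        (u 0 * X 0 1 + (u 2 - u 1) / Real.sqrt 3 * -X 0 0)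
        = u 0 * ((3 * X 0 1 + X 1 0) / 3)
          + u 1 * (2 / Real.sqrt 3 * X 0 0 - 2 / 3 * X 1 0)
          + u 2 * (-(2 / Real.sqrt 3) * X 0 0 - 2 / 3 * X 1 0) := by
      field_simp
      ring
    rw [expand]
    set vA := (3 * X 0 1 + X 1 0) / 3 with hvAdef
    set vB' := 2 / Real.sqrt 3 * X 0 0 - 2 / 3 * X 1 0 with hvBdef
    set vC' := -(2 / Real.sqrt 3) * X 0 0 - 2 / 3 * X 1 0 with hvCdef
    have hvA : vA < 0 := by rw [hvAdef]; linarith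
    set m := max vA (max vB' vC') with hm
    have hm0 : m < 0 := by
      rw [hm]
      exact max_lt hvA (max_lt vB vC)
    have t0 : u 0 * vA ≤ u 0 * m := mul_le_mul_of_nonneg_left (le_max_left _ _) h0
    have t1 : u 1 * vB' ≤ u 1 * m :=
      mul_le_mul_of_nonneg_left (le_trans (le_max_left _ _) (le_max_right _ _)) hb
    have t2 : u 2 * vC' ≤ u 2 * m :=
      mul_le_mul_of_nonneg_left (le_trans (le_max_right _ _) (le_max_right _ _)) hc
    have : u 0 * m + u 1 * m + u 2 * m = m := by rw [← add_mul, ← add_mul, hsum, one_mul]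
    linarith
  linarith [key]
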